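/- The t-derivative of Λ(t,T) at t = 0 equals βK(1+β)(1 - e^{-KT}), which is nonnegative for all K ∈ ℝ and β ≥ 0. -/

import Mathlib

open Real

theorem lambda_deriv_at_zero (β K T : ℝ) (hβ : 0 ≤ β) (hT : 0 < T) :
    deriv (fun t : ℝ => 1 + β * (1 - exp (-K * (T - t))) + (β + β ^ 2) * (1 - exp (-K * t))
        + (β ^ 2 / 2) * (exp (-K * (t + T)) - exp (-K * (T - t)))) 0
      = β * K * (1 + β) * (1 - exp (-K * T))
    ∧ 0 ≤ β * K * (1 + β) * (1 - exp (-K * T)) := by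
  constructor
  · have e1 : HasDerivAt (fun t : ℝ => exp (-K * (T - t))) (K * exp (-K * T)) 0 := by
      have h : HasDerivAt (fun t : ℝ => -K * (T - t)) K 0 := by
        have := ((hasDerivAt_id (0:ℝ)).const_sub T).const_mul (-K)
        simpa using this
      simpa [mul_comm] using h.exp
    have e2 : HasDerivAt (fun t : ℝ => exp (-K * t)) (-K) 0 := by
      have h : HasDerivAt (fun t : ℝ => -K * t) (-K) 0 := by
        simpa using (hasDerivAt_id (0:ℝ)).const_mul (-K)
      simpa using h.exp
    have e3 : HasDerivAt (fun t : ℝ => exp (-K * (t + T))) (-K * exp (-K * T)) 0 := by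
      have h : HasDerivAt (fun t : ℝ => -K * (t + T)) (-K) 0 := by
        simpa using ((hasDerivAt_id (0:ℝ)).add_const T).const_mul (-K)
      simpa [mul_comm] using h.exp
    have H := (((hasDerivAt_const (0:ℝ) (1:ℝ)).add
        (((hasDerivAt_const (0:ℝ) (1:ℝ)).sub e1).const_mul β)).add
        (((hasDerivAt_const (0:ℝ) (1:ℝ)).sub e2).const_mul (β + β ^ 2))).add
        ((e3.sub e1).const_mul (β ^ 2 / 2))
    refine H.deriv.trans ?_
    ring
  · have key : 0 ≤ K * T * (1 - exp (-(K * T))) := by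
      nlinarith [add_one_le_exp (-(K * T)), add_one_le_exp (K * T),
        exp_pos (-(K * T)), exp_pos (K * T),
        mul_le_mul_of_nonneg_left (add_one_le_exp (K * T)) (exp_pos (-(K * T))).le,
        Real.exp_neg (K * T), mul_inv_cancel₀ (ne_of_gt (exp_pos (K * T)))]
    have hb : 0 ≤ β * (1 + β) := by nlinarith
    have : 0 ≤ (β * (1 + β) / T) * (K * T * (1 - exp (-(K * T)))) :=
      mul_nonneg (div_nonneg hb hT.le) key
    have hTne : (T:ℝ) ≠ 0 := ne_of_gt hT
    calc (0:ℝ) ≤ (β * (1 + β) / T) * (K * T * (1 - exp (-(K * T)))) := this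
      _ = β * K * (1 + β) * (1 - exp (-K * T)) := by field_simp
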